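/- Let X, Y, K be compact metrizable spaces and f : X → Y continuous, and assume that for uncountably many y ∈ Y there is a closed subset of f⁻¹{y} that can be mapped continuously onto K. Then there is a K-loose function for f. -/

import Mathlib

open Set Topology

universe u

section Defs

variable {X Y K Z : Type*}

/-- A subset `S` of a topological space is *scattered* iff every nonempty subset `T ⊆ S`
has a point which is isolated in the subspace topology of `T`. -/
def IsScatteredSet [TopologicalSpace X] (S : Set X) : Prop :=
  ∀ T ⊆ S, T.Nonempty → ∃ x ∈ T, ∃ U : Set X, IsOpen U ∧ U ∩ T = {x}

/-- A *loose family* for `f : X → Y` : a pairwise disjoint family `Ps` of closed subsets of `X`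
such that for some non-scattered `Q ⊆ Y`, `f '' P = Q` for all `P ∈ Ps`. -/
def LooseFamily [TopologicalSpace X] [TopologicalSpace Y] (f : X → Y)
    (Ps : Set (Set X)) : Prop :=
  Ps.Pairwise Disjoint ∧ (∀ P ∈ Ps, IsClosed P) ∧
    ∃ Q : Set Y, ¬ IsScatteredSet Q ∧ ∀ P ∈ Ps, f '' P = Q

/-- `f` is `κ`-*tight* iff there is no loose family for `f` of cardinality `κ`. -/
def IsTightCard [TopologicalSpace X] [TopologicalSpace Y] (κ : Cardinal) (f : X → Y) : Prop :=
  ¬ ∃ Ps : Set (Set X), LooseFamily f Ps ∧ Cardinal.mk Ps = κ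

/-- `f` is *tight* iff it is `2`-tight. -/
def IsTight [TopologicalSpace X] [TopologicalSpace Y] (f : X → Y) : Prop :=
  IsTightCard 2 f

/-- A `K`-*loose function* for `f : X → Y` : a continuous `φ : D → K` with `D` closed in `X`,
such that for some non-scattered `Q ⊆ Y`, `φ(f⁻¹{y} ∩ D) = K` for all `y ∈ Q`. -/
def LooseFunction [TopologicalSpace X] [TopologicalSpace Y] [TopologicalSpace K]
    (f : X → Y) (D : Set X) (φ : X → K) : Prop :=
  IsClosed D ∧ ContinuousOn φ D ∧
    ∃ Q : Set Y, ¬ IsScatteredSet Q ∧ ∀ y ∈ Q, φ '' (f ⁻¹' {y} ∩ D) = Set.univ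

/-- `f` is *weakly c-tight* iff there is no `K`-loose function for `f`
with `K` the Cantor space `2^ω`. -/
def WeaklyCTight [TopologicalSpace X] [TopologicalSpace Y] (f : X → Y) : Prop :=
  ¬ ∃ (D : Set X) (φ : X → (ℕ → Bool)), LooseFunction f D φ

/-- `f` is *finer* than `g` iff `f x₁ = f x₂` implies `g x₁ = g x₂`. -/
def Finer (f : X → Y) (g : X → Z) : Prop :=
  ∀ x₁ x₂ : X, f x₁ = f x₂ → g x₁ = g x₂

end Defs

/-- `X` is `κ`-*dissipated* iff every continuous map from `X` to a compact metrizable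
space is refined by a `κ`-tight continuous map from `X` to a compact metrizable space. -/
def IsDissipatedCard (κ : Cardinal.{u}) (X : Type u) [TopologicalSpace X] : Prop :=
  ∀ (Z : Type u) [TopologicalSpace Z] [CompactSpace Z] [TopologicalSpace.MetrizableSpace Z],
    ∀ g : X → Z, Continuous g →
      ∃ (Y : Type u) (tY : TopologicalSpace Y),
        @CompactSpace Y tY ∧ @TopologicalSpace.MetrizableSpace Y tY ∧
        ∃ f : X → Y, @Continuous X Y _ tY f ∧ @IsTightCard X Y _ tY κ f ∧ Finer f g

/-- `X` is *weakly c-dissipated* iff every continuous map from `X` to a compact metrizable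
space is refined by a weakly c-tight continuous map from `X` to a compact metrizable space. -/
def IsWeaklyCDissipated (X : Type u) [TopologicalSpace X] : Prop :=
  ∀ (Z : Type u) [TopologicalSpace Z] [CompactSpace Z] [TopologicalSpace.MetrizableSpace Z],
    ∀ g : X → Z, Continuous g →
      ∃ (Y : Type u) (tY : TopologicalSpace Y),
        @CompactSpace Y tY ∧ @TopologicalSpace.MetrizableSpace Y tY ∧
        ∃ f : X → Y, @Continuous X Y _ tY f ∧ @WeaklyCTight X Y _ tY f ∧ Finer f g

section AuxSection
open Metric TopologicalSpace

lemma exists_condensation {P : Type*} [TopologicalSpace P] [SecondCountableTopology P]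
    {A : Set P} (hA : ¬ A.Countable) :
    ∃ A' : Set P, A' ⊆ A ∧ ¬ A'.Countable ∧
      ∀ a ∈ A', ∀ U : Set P, IsOpen U → a ∈ U → ¬ (U ∩ A').Countable := by
  classical
  set A' : Set P := {a | a ∈ A ∧ ∀ U : Set P, IsOpen U → a ∈ U → ¬ (U ∩ A).Countable} with hA'def
  have hsub : A' ⊆ A := fun a ha => ha.1
  have hdiff : (A \ A').Countable := by
    have hsub2 : A \ A' ⊆ ⋃ b ∈ {b | b ∈ countableBasis P ∧ (b ∩ A).Countable}, b ∩ A := by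
      rintro a ⟨haA, haA'⟩
      have : ∃ U : Set P, IsOpen U ∧ a ∈ U ∧ (U ∩ A).Countable := by
        by_contra hcon
        push_neg at hcon
        exact haA' ⟨haA, fun U hU haU => hcon U hU haU⟩
      obtain ⟨U, hU, haU, hcnt⟩ := this
      obtain ⟨b, hb, hab, hbU⟩ := (isBasis_countableBasis P).exists_subset_of_mem_open haU hU
      exact mem_biUnion ⟨hb, hcnt.mono (inter_subset_inter_left A hbU)⟩ ⟨hab, haA⟩
    refine Set.Countable.mono hsub2 ?_
    exact Set.Countable.biUnion ((countable_countableBasis P).mono (fun b hb => hb.1))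
      (fun b hb => hb.2)
  have hA'unc : ¬ A'.Countable := by
    intro hc
    apply hA
    refine Set.Countable.mono ?_ (hc.union hdiff)
    intro a ha
    by_cases h : a ∈ A'
    · exact Or.inl h
    · exact Or.inr ⟨ha, h⟩
  refine ⟨A', hsub, hA'unc, ?_⟩
  intro a ha U hU haU hcnt
  apply ha.2 U hU haU
  refine Set.Countable.mono ?_ (hcnt.union hdiff)
  intro a' ha'
  by_cases h : a' ∈ A'
  · exact Or.inl ⟨ha'.1, h⟩
  · exact Or.inr ⟨ha'.2, h⟩

lemma two_distinct {P : Type*} {C : Set P} (h : ¬ C.Countable) :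
    ∃ a ∈ C, ∃ b ∈ C, a ≠ b := by
  by_contra hcon
  push_neg at hcon
  exact h (Set.Subsingleton.countable (fun a ha b hb => hcon a ha b hb))

lemma cantor_dense (σ : ℕ → Bool) (W : Set (ℕ → Bool)) (hW : IsOpen W) (hσ : σ ∈ W) :
    ∃ τ ∈ W, τ ≠ σ := by
  classical
  obtain ⟨I, u, hu, hsub⟩ := isOpen_pi_iff.mp hW σ hσ
  obtain ⟨j, hj⟩ := Finset.exists_notMem I
  refine ⟨fun k => if k ∈ I then σ k else !σ k, ?_, ?_⟩
  · apply hsub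
    intro i hi
    have hi' : i ∈ I := hi
    simp only [if_pos hi']
    exact (hu i hi').2
  · intro hEq
    have := congrFun hEq j
    simp only [if_neg hj] at this
    exact Bool.not_ne_self (σ j) this

lemma not_scattered_range {Y : Type*} [TopologicalSpace Y] {g : (ℕ → Bool) → Y}
    (hc : Continuous g) (hi : Function.Injective g) : ¬ IsScatteredSet (Set.range g) := by
  intro hsc
  obtain ⟨x, hx, U, hU, hUx⟩ := hsc (Set.range g) Subset.rfl ⟨g (fun _ => false), mem_range_self _⟩
  obtain ⟨σ, rfl⟩ := hx
  have hσU : σ ∈ g ⁻¹' U := by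
    have : g σ ∈ U ∩ Set.range g := by rw [hUx]; rfl
    exact this.1
  obtain ⟨τ, hτ, hne⟩ := cantor_dense σ _ (hU.preimage hc) hσU
  have hmem : g τ ∈ U ∩ Set.range g := ⟨hτ, mem_range_self _⟩
  rw [hUx, mem_singleton_iff] at hmem
  exact hne (hi hmem)

lemma not_scattered_of_uncountable {Y : Type*} [TopologicalSpace Y] [SecondCountableTopology Y]
    {S : Set Y} (hS : ¬ S.Countable) : ∃ Q : Set Y, ¬ IsScatteredSet Q := by
  obtain ⟨A', _, hunc, hcond⟩ := exists_condensation hS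
  refine ⟨A', fun hsc => ?_⟩
  have hne : A'.Nonempty := by
    rcases A'.eq_empty_or_nonempty with rfl | hne
    · exact absurd countable_empty hunc
    · exact hne
  obtain ⟨x, hx, U, hU, hUx⟩ := hsc A' Subset.rfl hne
  have hxU : x ∈ U := by
    have : x ∈ U ∩ A' := by rw [hUx]; rfl
    exact this.1
  exact hcond x hx U hU hxU (hUx ▸ countable_singleton x)

section Main
variable {X Y K : Type*}
    [MetricSpace X] [CompactSpace X]
    [MetricSpace Y] [CompactSpace Y]
    [MetricSpace K] [CompactSpace K] [Nonempty K]

set_option maxHeartbeats 2000000 in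
theorem main_aux (f : X → Y) (hf : Continuous f) (S : Set Y) (hS : ¬ S.Countable)
    (hdata : ∀ y ∈ S, ∃ C : Set X, IsClosed C ∧ C ⊆ f ⁻¹' {y} ∧
        ∃ ψ : X → K, ContinuousOn ψ C ∧ ψ '' C = Set.univ) :
    ∃ (D : Set X) (φ : X → K), LooseFunction f D φ := by
  classical
  -- choose the data
  have hdata' : ∀ y : S, ∃ C : Set X, IsClosed C ∧ C ⊆ f ⁻¹' {(y : Y)} ∧
      ∃ ψ : X → K, ContinuousOn ψ C ∧ ψ '' C = Set.univ := fun y => hdata y y.2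
  choose C hCcl hCsub ψ hψc hψs using hdata'
  -- moduli of uniform continuity
  have hmod : ∀ (y : S) (k : ℕ), ∃ j : ℕ, ∀ x ∈ C y, ∀ x' ∈ C y,
      dist x x' ≤ 1 / (j + 1 : ℝ) → dist (ψ y x) (ψ y x') ≤ 1 / (k + 1 : ℝ) := by
    intro y k
    have hucont : UniformContinuousOn (ψ y) (C y) :=
      (hCcl y).isCompact.uniformContinuousOn_of_continuous (hψc y)
    have hε : (0:ℝ) < 1 / (k + 1) := by positivity
    rw [Metric.uniformContinuousOn_iff] at hucont
    obtain ⟨δ, hδ, hd⟩ := hucont _ hε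
    obtain ⟨j, hj⟩ := exists_nat_one_div_lt hδ
    exact ⟨j, fun x hx x' hx' hxx' => (hd x hx x' hx' (lt_of_le_of_lt hxx' hj)).le⟩
  choose m hm using hmod
  -- graphs
  have hGcpt : ∀ y : S, IsCompact ((fun x => (x, ψ y x)) '' C y) := fun y =>
    (hCcl y).isCompact.image_of_continuousOn (continuousOn_id.prodMk (hψc y))
  have hGne : ∀ y : S, ((fun x => (x, ψ y x)) '' C y).Nonempty := by
    intro y
    have h1 : (Set.univ : Set K).Nonempty := univ_nonempty
    rw [← hψs y] at h1
    obtain ⟨k, x, hx, _⟩ := h1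
    exact ⟨(x, ψ y x), mem_image_of_mem _ hx⟩
  set G : S → NonemptyCompacts (X × K) := fun y => ⟨⟨_, hGcpt y⟩, hGne y⟩ with hGdef
  have hGfib : ∀ (y : S) (z : X × K), z ∈ (G y : Set (X × K)) →
      z.1 ∈ C y ∧ f z.1 = (y : Y) ∧ ψ y z.1 = z.2 := by
    intro y z hz
    obtain ⟨x, hx, rfl⟩ := hz
    exact ⟨hx, hCsub y hx, rfl⟩
  have hGsurj : ∀ (y : S) (k : K), ∃ x : X, (x, k) ∈ (G y : Set (X × K)) := by
    intro y k
    have : k ∈ ψ y '' C y := by rw [hψs y]; trivial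
    obtain ⟨x, hx, rfl⟩ := this
    exact ⟨x, mem_image_of_mem _ hx⟩
  -- the parameter space
  set e : S → Y × NonemptyCompacts (X × K) × (ℕ → ℕ) := fun y => ((y : Y), G y, m y) with hedef
  have hA : ¬ (Set.range e).Countable := by
    intro hc
    apply hS
    have hsub : S ⊆ Prod.fst '' (Set.range e) := by
      intro y hy
      exact ⟨e ⟨y, hy⟩, mem_range_self _, rfl⟩
    exact Set.Countable.mono hsub (hc.image _)
  obtain ⟨A', hA'sub, hA'unc, hA'cond⟩ := exists_condensation hA
  have hA'form : ∀ a ∈ A', ∃ y : S, e y = a := fun a ha => hA'sub ha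
  have hA'ne : A'.Nonempty := by
    rcases A'.eq_empty_or_nonempty with rfl | hne
    · exact absurd countable_empty hA'unc
    · exact hne
  obtain ⟨a₀, ha₀⟩ := hA'ne
  -- the key splitting step
  have key : ∀ a : Y × NonemptyCompacts (X × K) × (ℕ → ℕ), a ∈ A' → ∀ r : ℝ, 0 < r → ∀ n : ℕ,
      ∃ q : ((Y × NonemptyCompacts (X × K) × (ℕ → ℕ)) × (Y × NonemptyCompacts (X × K) × (ℕ → ℕ))) × ℝ,
        q.1.1 ∈ A' ∧ q.1.2 ∈ A' ∧ q.1.1.1 ≠ q.1.2.1 ∧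
        (dist q.1.1.1 a.1 < r/4 ∧ dist q.1.1.2.1 a.2.1 < (1/2:ℝ)^n ∧ ∀ k ≤ n, q.1.1.2.2 k = a.2.2 k) ∧
        (dist q.1.2.1 a.1 < r/4 ∧ dist q.1.2.2.1 a.2.1 < (1/2:ℝ)^n ∧ ∀ k ≤ n, q.1.2.2.2 k = a.2.2 k) ∧
        0 < q.2 ∧ q.2 ≤ (1/2:ℝ)^(n+1) ∧ q.2 ≤ r/4 ∧
        Disjoint (closedBall q.1.1.1 q.2) (closedBall q.1.2.1 q.2) := by
    intro a ha r hr n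
    set U : Set (Y × NonemptyCompacts (X × K) × (ℕ → ℕ)) :=
      ((fun p : Y × NonemptyCompacts (X × K) × (ℕ → ℕ) => p.1) ⁻¹' Metric.ball a.1 (r/4)) ∩
      (((fun p : Y × NonemptyCompacts (X × K) × (ℕ → ℕ) => p.2.1) ⁻¹' Metric.ball a.2.1 ((1/2:ℝ)^n)) ∩
       (⋂ k ∈ Finset.range (n+1), (fun p : Y × NonemptyCompacts (X × K) × (ℕ → ℕ) => p.2.2 k) ⁻¹' {a.2.2 k})) with hUdef
    have hUopen : IsOpen U := by
      refine IsOpen.inter (Metric.isOpen_ball.preimage continuous_fst) (IsOpen.inter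
        (Metric.isOpen_ball.preimage (continuous_fst.comp continuous_snd)) ?_)
      exact isOpen_biInter_finset fun k _ =>
        (isOpen_discrete _).preimage ((continuous_apply k).comp (continuous_snd.comp continuous_snd))
    have hmemU : ∀ p, p ∈ U ↔ dist p.1 a.1 < r/4 ∧ dist p.2.1 a.2.1 < (1/2:ℝ)^n ∧
        ∀ k ≤ n, p.2.2 k = a.2.2 k := by
      intro p
      simp only [hUdef, mem_inter_iff, mem_preimage, Metric.mem_ball, mem_iInter,
        Finset.mem_range, mem_singleton_iff, Nat.lt_succ_iff]
    have haU : a ∈ U := by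
      rw [hmemU]
      refine ⟨by simp [hr], by simp [pow_pos], fun k _ => rfl⟩
    have huncnt := hA'cond a ha U hUopen haU
    obtain ⟨p, hp, q, hq, hpq⟩ := two_distinct huncnt
    have hfst : p.1 ≠ q.1 := by
      intro hEq
      apply hpq
      obtain ⟨yp, hyp⟩ := hA'form p hp.2
      obtain ⟨yq, hyq⟩ := hA'form q hq.2
      have hyy : yp = yq := by
        apply Subtype.ext
        have h1 : (yp : Y) = p.1 := congrArg Prod.fst hyp
        have h2 : (yq : Y) = q.1 := congrArg Prod.fst hyq
        rw [h1, h2, hEq]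
      rw [← hyp, ← hyq, hyy]
    have hdpos : 0 < dist p.1 q.1 := dist_pos.mpr hfst
    refine ⟨((p, q), min ((1/2:ℝ)^(n+1)) (min (r/4) (dist p.1 q.1 / 3))), hp.2, hq.2, hfst,
      ?_, ?_, ?_, ?_, ?_, ?_⟩
    · exact (hmemU p).mp hp.1
    · exact (hmemU q).mp hq.1
    · positivity
    · exact min_le_left _ _
    · exact le_trans (min_le_right _ _) (min_le_left _ _)
    · have hrle : min ((1/2:ℝ)^(n+1)) (min (r/4) (dist p.1 q.1 / 3)) ≤ dist p.1 q.1 / 3 :=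
        le_trans (min_le_right _ _) (min_le_right _ _)
      apply Metric.closedBall_disjoint_closedBall
      calc min ((1/2:ℝ)^(n+1)) (min (r/4) (dist p.1 q.1 / 3)) +
            min ((1/2:ℝ)^(n+1)) (min (r/4) (dist p.1 q.1 / 3)) ≤
          dist p.1 q.1 / 3 + dist p.1 q.1 / 3 := add_le_add hrle hrle
        _ < dist p.1 q.1 := by linarith
  choose! step hstep using key
  -- the binary tree of choices
  set F : List Bool → (Y × NonemptyCompacts (X × K) × (ℕ → ℕ)) × ℝ := fun s =>
    List.rec ((a₀, 1) : (Y × NonemptyCompacts (X × K) × (ℕ → ℕ)) × ℝ)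
      (fun i t ih => (cond i (step ih.1 ih.2 t.length).1.2 (step ih.1 ih.2 t.length).1.1,
        (step ih.1 ih.2 t.length).2)) s with hFdef
  set ys : List Bool → Y := fun s => (F s).1.1 with hysdef
  set Gs : List Bool → NonemptyCompacts (X × K) := fun s => (F s).1.2.1 with hGsdef
  set ms : List Bool → ℕ → ℕ := fun s => (F s).1.2.2 with hmsdef
  set rs : List Bool → ℝ := fun s => (F s).2 with hrsdef
  have hFcons : ∀ (i : Bool) (s : List Bool),
      F (i :: s) = (cond i (step (F s).1 (F s).2 s.length).1.2 (step (F s).1 (F s).2 s.length).1.1,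
        (step (F s).1 (F s).2 s.length).2) := fun i s => rfl
  have hInv : ∀ s : List Bool, (F s).1 ∈ A' ∧ 0 < (F s).2 ∧ (F s).2 ≤ (1/2:ℝ)^s.length := by
    intro s
    induction s with
    | nil => exact ⟨ha₀, one_pos, by norm_num⟩
    | cons i s ih =>
      obtain ⟨h1, h2, h3⟩ := ih
      obtain ⟨m1, m2, mne, c0, c1, rpos, rle2, rle4, rdisj⟩ := hstep (F s).1 h1 (F s).2 h2 s.length
      rw [hFcons]
      refine ⟨?_, rpos, ?_⟩
      · cases i
        · exact m1
        · exact m2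
      · simpa using rle2
  have hchild : ∀ (i : Bool) (s : List Bool),
      dist (ys (i :: s)) (ys s) < rs s / 4 ∧
      dist (Gs (i :: s)) (Gs s) < (1/2:ℝ)^s.length ∧
      (∀ k ≤ s.length, ms (i :: s) k = ms s k) ∧
      0 < rs (i :: s) ∧ rs (i :: s) ≤ (1/2:ℝ)^(s.length+1) ∧ rs (i :: s) ≤ rs s / 4 := by
    intro i s
    obtain ⟨h1, h2, h3⟩ := hInv s
    obtain ⟨m1, m2, mne, c0, c1, rpos, rle2, rle4, rdisj⟩ := hstep (F s).1 h1 (F s).2 h2 s.length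
    cases i
    · exact ⟨c0.1, c0.2.1, c0.2.2, rpos, rle2, rle4⟩
    · exact ⟨c1.1, c1.2.1, c1.2.2, rpos, rle2, rle4⟩
  have hsib : ∀ s : List Bool, ys (false :: s) ≠ ys (true :: s) ∧
      Disjoint (closedBall (ys (false :: s)) (rs (false :: s)))
        (closedBall (ys (true :: s)) (rs (true :: s))) := by
    intro s
    obtain ⟨h1, h2, h3⟩ := hInv s
    obtain ⟨m1, m2, mne, c0, c1, rpos, rle2, rle4, rdisj⟩ := hstep (F s).1 h1 (F s).2 h2 s.length
    exact ⟨mne, rdisj⟩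
  -- nodes are of the chosen form
  have hnode : ∀ s : List Bool, ∃ y : S, e y = (F s).1 := fun s => hA'form _ (hInv s).1
  choose yh hyh using hnode
  have hyh1 : ∀ s, ys s = (yh s : Y) := fun s => (congrArg Prod.fst (hyh s)).symm
  have hyh2 : ∀ s, Gs s = G (yh s) := fun s => (congrArg (fun p => p.2.1) (hyh s)).symm
  have hyh3 : ∀ s, ms s = m (yh s) := fun s => (congrArg (fun p => p.2.2) (hyh s)).symm
  -- nesting of balls
  have hnest : ∀ (i : Bool) (s : List Bool),
      closedBall (ys (i :: s)) (rs (i :: s)) ⊆ closedBall (ys s) (rs s) := by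
    intro i s z hz
    have h := hchild i s
    have htri : dist z (ys s) ≤ dist z (ys (i :: s)) + dist (ys (i :: s)) (ys s) :=
      dist_triangle _ _ _
    have hzle : dist z (ys (i :: s)) ≤ rs (i :: s) := mem_closedBall.mp hz
    have hpos := (hInv s).2.1
    rw [mem_closedBall]
    linarith [h.1, h.2.2.2.2.2]
  -- branches
  set nd : (ℕ → Bool) → ℕ → List Bool := fun σ n => Nat.rec [] (fun k ih => σ k :: ih) n with hnddef
  have hndS : ∀ σ n, nd σ (n+1) = σ n :: nd σ n := fun _ _ => rfl
  have hndlen : ∀ σ n, (nd σ n).length = n := by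
    intro σ n
    induction n with
    | zero => rfl
    | succ n ih => rw [hndS, List.length_cons, ih]
  have hndeq : ∀ (σ τ : ℕ → Bool) (n : ℕ), (∀ k < n, σ k = τ k) → nd σ n = nd τ n := by
    intro σ τ n h
    induction n with
    | zero => rfl
    | succ n ih =>
      rw [hndS, hndS, h n (Nat.lt_succ_self n), ih (fun k hk => h k (hk.trans (Nat.lt_succ_self n)))]
  have hnest' : ∀ (σ : ℕ → Bool) (n p : ℕ), n ≤ p →
      closedBall (ys (nd σ p)) (rs (nd σ p)) ⊆ closedBall (ys (nd σ n)) (rs (nd σ n)) := by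
    intro σ n p hnp
    induction p, hnp using Nat.le_induction with
    | base => exact subset_rfl
    | succ p hp ih => exact (hnest (σ p) (nd σ p)).trans ih
  have hmemB : ∀ (σ : ℕ → Bool) (n p : ℕ), n ≤ p →
      ys (nd σ p) ∈ closedBall (ys (nd σ n)) (rs (nd σ n)) :=
    fun σ n p h => hnest' σ n p h (mem_closedBall_self (hInv _).2.1.le)
  have hrsle : ∀ s, rs s ≤ (1/2:ℝ)^s.length := fun s => (hInv s).2.2
  -- limits along branches
  have hyC : ∀ σ : ℕ → Bool, ∃ yy : Y, Filter.Tendsto (fun n => ys (nd σ n)) Filter.atTop (nhds yy) := by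
    intro σ
    apply cauchySeq_tendsto_of_complete
    apply cauchySeq_of_le_geometric (1/2 : ℝ) 1 (by norm_num)
    intro n
    have h := mem_closedBall.mp (hmemB σ n (n+1) (Nat.le_succ n))
    rw [dist_comm]
    calc dist (ys (nd σ (n+1))) (ys (nd σ n)) ≤ rs (nd σ n) := h
      _ ≤ (1/2:ℝ)^(nd σ n).length := hrsle _
      _ = 1 * (1/2:ℝ)^n := by rw [hndlen]; ring
  choose ybr hybr using hyC
  have hGC : ∀ σ : ℕ → Bool, ∃ GG : NonemptyCompacts (X × K),
      Filter.Tendsto (fun n => Gs (nd σ n)) Filter.atTop (nhds GG) := by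
    intro σ
    apply cauchySeq_tendsto_of_complete
    apply cauchySeq_of_le_geometric (1/2 : ℝ) 1 (by norm_num)
    intro n
    have h := (hchild (σ n) (nd σ n)).2.1
    rw [hndlen] at h
    rw [dist_comm]
    calc dist (Gs (nd σ (n+1))) (Gs (nd σ n)) = dist (Gs (σ n :: nd σ n)) (Gs (nd σ n)) := by
          rw [hndS]
      _ ≤ 1 * (1/2:ℝ)^n := by rw [one_mul]; exact h.le
  choose Gbr hGbr using hGC
  -- limit estimates
  have hyin : ∀ (σ : ℕ → Bool) (n : ℕ), ybr σ ∈ closedBall (ys (nd σ n)) (rs (nd σ n)) := by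
    intro σ n
    refine Metric.isClosed_closedBall.mem_of_tendsto (hybr σ) ?_
    exact Filter.eventually_atTop.mpr ⟨n, fun p hp => hmemB σ n p hp⟩
  have hGest : ∀ (σ : ℕ → Bool) (n : ℕ), dist (Gbr σ) (Gs (nd σ n)) ≤ 2 * (1/2:ℝ)^n := by
    intro σ n
    have hstep2 : ∀ p, n ≤ p →
        dist (Gs (nd σ p)) (Gs (nd σ n)) ≤ 2*(1/2:ℝ)^n - 2*(1/2:ℝ)^p := by
      intro p hp
      induction p, hp using Nat.le_induction with
      | base => simp
      | succ p hp ih =>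
        have h1 : dist (Gs (nd σ (p+1))) (Gs (nd σ p)) ≤ (1/2:ℝ)^p := by
          have h := (hchild (σ p) (nd σ p)).2.1
          rw [hndlen] at h
          rw [hndS]
          exact h.le
        have htri : dist (Gs (nd σ (p+1))) (Gs (nd σ n)) ≤
            dist (Gs (nd σ (p+1))) (Gs (nd σ p)) + dist (Gs (nd σ p)) (Gs (nd σ n)) :=
          dist_triangle _ _ _
        have hps : (1/2:ℝ)^(p+1) = (1/2:ℝ)^p * (1/2) := pow_succ _ _
        linarith
    have htend : Filter.Tendsto (fun p => dist (Gs (nd σ p)) (Gs (nd σ n))) Filter.atTop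
        (nhds (dist (Gbr σ) (Gs (nd σ n)))) := (hGbr σ).dist tendsto_const_nhds
    refine le_of_tendsto htend (Filter.eventually_atTop.mpr ⟨n, fun p hp => ?_⟩)
    have := hstep2 p hp
    have hpp : 0 < (1/2:ℝ)^p := by positivity
    linarith
  -- Hausdorff approximation
  have happrox : ∀ (E E' : NonemptyCompacts (X × K)) (z : X × K), z ∈ (E : Set (X × K)) →
      ∀ ε : ℝ, dist E E' < ε → ∃ w ∈ (E' : Set (X × K)), dist z w < ε := by
    intro E E' z hz ε hd
    rw [NonemptyCompacts.dist_eq] at hd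
    exact exists_dist_lt_of_hausdorffDist_lt hz hd
      (hausdorffEdist_ne_top_of_nonempty_of_bounded E.nonempty E'.nonempty
        E.isCompact.isBounded E'.isCompact.isBounded)
  have hGbig : ∀ (σ : ℕ → Bool) (n : ℕ), dist (Gbr σ) (Gs (nd σ n)) < 3 * (1/2:ℝ)^n := by
    intro σ n
    have hpp : 0 < (1/2:ℝ)^n := by positivity
    linarith [hGest σ n]
  have hGbig' : ∀ (σ : ℕ → Bool) (n : ℕ), dist (Gs (nd σ n)) (Gbr σ) < 3 * (1/2:ℝ)^n := by
    intro σ n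
    rw [dist_comm]
    exact hGbig σ n
  -- every point of a branch graph lies over the branch limit point
  have hfib : ∀ (σ : ℕ → Bool) (z : X × K), z ∈ (Gbr σ : Set (X × K)) → f z.1 = ybr σ := by
    intro σ z hz
    have hseq : ∀ n : ℕ, ∃ w ∈ (Gs (nd σ n) : Set (X × K)), dist z w < 3 * (1/2:ℝ)^n :=
      fun n => happrox _ _ z hz _ (hGbig σ n)
    choose w hw1 hw2 using hseq
    have hwz : Filter.Tendsto w Filter.atTop (nhds z) := by
      rw [tendsto_iff_dist_tendsto_zero]
      refine squeeze_zero (g := fun n => 3 * (1/2:ℝ)^n) (fun n => dist_nonneg) (fun n => ?_) ?_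
      · exact (dist_comm (w n) z ▸ (hw2 n).le : dist (w n) z ≤ 3 * (1/2:ℝ)^n)
      · have := tendsto_pow_atTop_nhds_zero_of_lt_one (by norm_num : (0:ℝ) ≤ 1/2)
          (by norm_num : (1/2:ℝ) < 1)
        simpa using this.const_mul (3:ℝ)
    have hfw : ∀ n : ℕ, f (w n).1 = ys (nd σ n) := by
      intro n
      have hmem : w n ∈ (G (yh (nd σ n)) : Set (X × K)) := by
        rw [← hyh2]
        exact hw1 n
      have := (hGfib (yh (nd σ n)) (w n) hmem).2.1
      rw [this, hyh1]
    have h1 : Filter.Tendsto (fun n => f (w n).1) Filter.atTop (nhds (f z.1)) :=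
      ((hf.comp continuous_fst).tendsto z).comp hwz
    have h2 : Filter.Tendsto (fun n => ys (nd σ n)) Filter.atTop (nhds (f z.1)) := by
      refine h1.congr ?_
      intro n
      exact hfw n
    exact tendsto_nhds_unique h2 (hybr σ)
  -- branch graphs are onto K
  have hsurjbr : ∀ (σ : ℕ → Bool) (k : K), ∃ x : X, (x, k) ∈ (Gbr σ : Set (X × K)) := by
    intro σ k
    obtain ⟨z₀, hz₀, hmin⟩ := (Gbr σ).isCompact.exists_isMinOn (Gbr σ).nonempty
      ((continuous_snd.dist continuous_const).continuousOn :
        ContinuousOn (fun z : X × K => dist z.2 k) _)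
    have hz2 : z₀.2 = k := by
      by_contra hne
      have hpos : 0 < dist z₀.2 k := dist_pos.mpr hne
      obtain ⟨n, hn⟩ := exists_pow_lt_of_lt_one (show (0:ℝ) < dist z₀.2 k / 3 by linarith)
        (by norm_num : (1/2:ℝ) < 1)
      obtain ⟨x, hx⟩ := hGsurj (yh (nd σ n)) k
      have hx' : ((x, k) : X × K) ∈ (Gs (nd σ n) : Set (X × K)) := by
        rw [hyh2]
        exact hx
      obtain ⟨v, hv, hdv⟩ := happrox _ _ (x, k) hx' _ (hGbig' σ n)
      have hcomp : dist v.2 k ≤ dist (x, k) v := by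
        rw [dist_comm v.2 k]
        rw [Prod.dist_eq]
        exact le_max_right _ _
      have hminv := isMinOn_iff.mp hmin v hv
      have : 3 * (1/2:ℝ)^n < dist z₀.2 k := by linarith
      linarith
    exact ⟨z₀.1, by rw [show ((z₀.1, k) : X × K) = z₀ from Prod.ext rfl hz2.symm]; exact hz₀⟩
  -- modulus stabilization
  have hms : ∀ (σ : ℕ → Bool) (k n : ℕ), k ≤ n → ms (nd σ n) k = ms (nd σ k) k := by
    intro σ k n hkn
    induction n, hkn using Nat.le_induction with
    | base => rfl
    | succ n hn ih =>
      have h := (hchild (σ n) (nd σ n)).2.2.1 k (by rw [hndlen]; exact hn)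
      rw [hndS]
      rw [h]
      exact ih
  -- branch graphs are graphs of functions
  have hgraphbr : ∀ (σ : ℕ → Bool) (x : X) (k k' : K),
      (x, k) ∈ (Gbr σ : Set (X × K)) → (x, k') ∈ (Gbr σ : Set (X × K)) → k = k' := by
    intro σ x k k' hk hk'
    have main : ∀ ε : ℝ, 0 < ε → dist k k' ≤ 0 + ε := by
      intro ε hε
      obtain ⟨c, hc⟩ := exists_nat_one_div_lt (show (0:ℝ) < ε/3 by linarith)
      set J := m (yh (nd σ c)) c with hJdef
      obtain ⟨n₁, hn₁⟩ := exists_pow_lt_of_lt_one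
        (show (0:ℝ) < (1/(J+1:ℝ))/6 by positivity) (by norm_num : (1/2:ℝ) < 1)
      obtain ⟨n₂, hn₂⟩ := exists_pow_lt_of_lt_one
        (show (0:ℝ) < ε/9 by linarith) (by norm_num : (1/2:ℝ) < 1)
      set n := max c (max n₁ n₂) with hndef
      have hcn : c ≤ n := le_max_left _ _
      have hp1 : (1/2:ℝ)^n ≤ (1/2)^n₁ :=
        pow_le_pow_of_le_one (by norm_num) (by norm_num)
          (le_trans (le_max_left _ _) (le_max_right _ _))
      have hp2 : (1/2:ℝ)^n ≤ (1/2)^n₂ :=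
        pow_le_pow_of_le_one (by norm_num) (by norm_num)
          (le_trans (le_max_right _ _) (le_max_right _ _))
      obtain ⟨w, hw, hdw⟩ := happrox _ _ (x, k) hk _ (hGbig σ n)
      obtain ⟨w', hw', hdw'⟩ := happrox _ _ (x, k') hk' _ (hGbig σ n)
      have hwG : w ∈ (G (yh (nd σ n)) : Set (X × K)) := by rw [← hyh2]; exact hw
      have hw'G : w' ∈ (G (yh (nd σ n)) : Set (X × K)) := by rw [← hyh2]; exact hw'
      obtain ⟨hwC, -, hwψ⟩ := hGfib _ _ hwG
      obtain ⟨hw'C, -, hw'ψ⟩ := hGfib _ _ hw'G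
      have hJn : m (yh (nd σ n)) c = J := by
        have h1 := hms σ c n hcn
        rw [hyh3, hyh3] at h1
        rw [h1]
      have hmodn := hm (yh (nd σ n)) c
      rw [hJn] at hmodn
      have e1 : dist w.1 x ≤ 3 * (1/2:ℝ)^n := by
        have : dist w.1 x ≤ dist w (x, k) := by
          rw [Prod.dist_eq]; exact le_max_left _ _
        rw [dist_comm w (x,k)] at this
        linarith
      have e1' : dist w'.1 x ≤ 3 * (1/2:ℝ)^n := by
        have : dist w'.1 x ≤ dist w' (x, k') := by
          rw [Prod.dist_eq]; exact le_max_left _ _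
        rw [dist_comm w' (x,k')] at this
        linarith
      have e2 : dist k w.2 ≤ 3 * (1/2:ℝ)^n := by
        have : dist k w.2 ≤ dist (x, k) w := by
          rw [Prod.dist_eq]; exact le_max_right _ _
        linarith
      have e2' : dist k' w'.2 ≤ 3 * (1/2:ℝ)^n := by
        have : dist k' w'.2 ≤ dist (x, k') w' := by
          rw [Prod.dist_eq]; exact le_max_right _ _
        linarith
      have e3 : dist w.1 w'.1 ≤ 1/(J+1:ℝ) := by
        have htri : dist w.1 w'.1 ≤ dist w.1 x + dist x w'.1 := dist_triangle _ _ _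
        rw [dist_comm x w'.1] at htri
        have h6 : (6:ℝ) * (1/2)^n ≤ 1/(J+1:ℝ) := by
          have : (1/2:ℝ)^n < (1/(J+1:ℝ))/6 := lt_of_le_of_lt hp1 hn₁
          linarith
        linarith
      have e4 : dist w.2 w'.2 ≤ 1/(c+1:ℝ) := by
        rw [← hwψ, ← hw'ψ]
        exact hmodn w.1 hwC w'.1 hw'C e3
      have hsmall : 3 * (1/2:ℝ)^n ≤ ε/3 := by
        have : (1/2:ℝ)^n < ε/9 := lt_of_le_of_lt hp2 hn₂
        linarith
      have htri2 : dist k k' ≤ dist k w.2 + dist w.2 w'.2 + dist w'.2 k' :=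
        dist_triangle4 _ _ _ _
      rw [dist_comm w'.2 k'] at htri2
      have hcc : 1/(c+1:ℝ) ≤ ε/3 := hc.le
      linarith
    have hd0 : dist k k' ≤ 0 := le_of_forall_pos_le_add main
    exact eq_of_dist_eq_zero (le_antisymm hd0 dist_nonneg)
  -- injectivity of the branch limit map
  have hyinj : Function.Injective ybr := by
    intro σ τ hEq
    by_contra hne
    have hex : ∃ n, σ n ≠ τ n := by
      by_contra hcon
      push_neg at hcon
      exact hne (funext hcon)
    set n := Nat.find hex with hndef
    have hagree : ∀ k < n, σ k = τ k := fun k hk => by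
      by_contra hcon
      exact Nat.find_min hex hk hcon
    have hpre : nd σ n = nd τ n := hndeq σ τ n hagree
    have hspec : σ n ≠ τ n := Nat.find_spec hex
    have hmemσ := hyin σ (n+1)
    have hmemτ := hyin τ (n+1)
    rw [hndS] at hmemσ hmemτ
    rw [hpre] at hmemσ
    have hdisj := (hsib (nd τ n)).2
    cases hσn : σ n with
    | false =>
      cases hτn : τ n with
      | false => exact hspec (hσn.trans hτn.symm)
      | true =>
        rw [hσn] at hmemσ
        rw [hτn] at hmemτ
        rw [hEq] at hmemσ
        exact Set.disjoint_left.mp hdisj hmemσ hmemτ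
    | true =>
      cases hτn : τ n with
      | true => exact hspec (hσn.trans hτn.symm)
      | false =>
        rw [hσn] at hmemσ
        rw [hτn] at hmemτ
        rw [hEq] at hmemσ
        exact Set.disjoint_left.mp hdisj hmemτ hmemσ
  -- continuity of the branch maps
  have hcyl : ∀ (σ : ℕ → Bool) (n : ℕ), {τ : ℕ → Bool | ∀ k < n, τ k = σ k} ∈ nhds σ := by
    intro σ n
    have hopen : IsOpen {τ : ℕ → Bool | ∀ k < n, τ k = σ k} := by
      have hEq : {τ : ℕ → Bool | ∀ k < n, τ k = σ k} =
          ⋂ k ∈ Finset.range n, (fun τ : ℕ → Bool => τ k) ⁻¹' {σ k} := by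
        ext τ
        simp [Finset.mem_range]
      rw [hEq]
      exact isOpen_biInter_finset fun k _ => (isOpen_discrete _).preimage (continuous_apply k)
    exact hopen.mem_nhds (fun k _ => rfl)
  have hycont : Continuous ybr := by
    rw [continuous_iff_continuousAt]
    intro σ
    rw [ContinuousAt, Metric.tendsto_nhds]
    intro ε hε
    obtain ⟨n, hn⟩ := exists_pow_lt_of_lt_one (show (0:ℝ) < ε/2 by linarith)
      (by norm_num : (1/2:ℝ) < 1)
    filter_upwards [hcyl σ n] with τ hτ
    have hpre : nd τ n = nd σ n := hndeq τ σ n hτ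
    have h1 : ybr τ ∈ closedBall (ys (nd σ n)) (rs (nd σ n)) := by
      rw [← hpre]
      exact hyin τ n
    have h2 := hyin σ n
    have htri : dist (ybr τ) (ybr σ) ≤ dist (ybr τ) (ys (nd σ n)) + dist (ys (nd σ n)) (ybr σ) :=
      dist_triangle _ _ _
    rw [dist_comm (ys (nd σ n)) (ybr σ)] at htri
    have hb1 : dist (ybr τ) (ys (nd σ n)) ≤ rs (nd σ n) := mem_closedBall.mp h1
    have hb2 : dist (ybr σ) (ys (nd σ n)) ≤ rs (nd σ n) := mem_closedBall.mp h2
    have hb3 : rs (nd σ n) ≤ (1/2:ℝ)^n := by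
      have := hrsle (nd σ n)
      rwa [hndlen] at this
    calc dist (ybr τ) (ybr σ) ≤ rs (nd σ n) + rs (nd σ n) := by linarith
      _ ≤ (1/2:ℝ)^n + (1/2:ℝ)^n := by linarith
      _ < ε := by linarith
  have hGcont : Continuous Gbr := by
    rw [continuous_iff_continuousAt]
    intro σ
    rw [ContinuousAt, Metric.tendsto_nhds]
    intro ε hε
    obtain ⟨n, hn⟩ := exists_pow_lt_of_lt_one (show (0:ℝ) < ε/4 by linarith)
      (by norm_num : (1/2:ℝ) < 1)
    filter_upwards [hcyl σ n] with τ hτ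
    have hpre : nd τ n = nd σ n := hndeq τ σ n hτ
    have h1 : dist (Gbr τ) (Gs (nd σ n)) ≤ 2 * (1/2:ℝ)^n := by
      rw [← hpre]
      exact hGest τ n
    have h2 := hGest σ n
    have htri : dist (Gbr τ) (Gbr σ) ≤ dist (Gbr τ) (Gs (nd σ n)) + dist (Gs (nd σ n)) (Gbr σ) :=
      dist_triangle _ _ _
    rw [dist_comm (Gs (nd σ n)) (Gbr σ)] at htri
    calc dist (Gbr τ) (Gbr σ) ≤ 2 * (1/2:ℝ)^n + 2 * (1/2:ℝ)^n := by linarith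
      _ < ε := by linarith
  -- cross-branch uniqueness
  have hcross : ∀ (σ τ : ℕ → Bool) (x : X) (k k' : K),
      (x, k) ∈ (Gbr σ : Set (X × K)) → (x, k') ∈ (Gbr τ : Set (X × K)) → k = k' := by
    intro σ τ x k k' hk hk'
    have h1 : f x = ybr σ := hfib σ (x, k) hk
    have h2 : f x = ybr τ := hfib τ (x, k') hk'
    have : σ = τ := hyinj (h1 ▸ h2)
    exact hgraphbr σ x k k' hk (this ▸ hk')
  -- the global graph
  set Gstar : Set (X × K) := ⋃ σ : ℕ → Bool, (Gbr σ : Set (X × K)) with hGstardef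
  have hGmem : ∀ z : X × K, z ∈ Gstar ↔ ∃ σ : ℕ → Bool, z ∈ (Gbr σ : Set (X × K)) := by
    intro z
    rw [hGstardef, mem_iUnion]
  have hGstarclosed : IsClosed Gstar := by
    rw [← isOpen_compl_iff, Metric.isOpen_iff]
    intro z hz
    have hcont : Continuous fun σ : ℕ → Bool => infDist z (Gbr σ : Set (X × K)) :=
      ((lipschitz_infDist_set z).continuous).comp hGcont
    obtain ⟨σ₀, -, hσ₀⟩ := isCompact_univ.exists_isMinOn univ_nonempty hcont.continuousOn
    have hpos : 0 < infDist z (Gbr σ₀ : Set (X × K)) := by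
      rw [← (Gbr σ₀).isCompact.isClosed.notMem_iff_infDist_pos (Gbr σ₀).nonempty]
      exact fun hmem => hz ((hGmem z).mpr ⟨σ₀, hmem⟩)
    refine ⟨infDist z (Gbr σ₀ : Set (X × K)), hpos, ?_⟩
    intro v hv
    rw [mem_compl_iff]
    intro hvmem
    obtain ⟨σ, hσ⟩ := (hGmem v).mp hvmem
    have h1 : infDist z (Gbr σ : Set (X × K)) ≤ dist z v := infDist_le_dist_of_mem hσ
    have h2 : infDist z (Gbr σ₀ : Set (X × K)) ≤ infDist z (Gbr σ : Set (X × K)) :=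
      isMinOn_iff.mp hσ₀ σ (mem_univ σ)
    have h3 : dist v z < infDist z (Gbr σ₀ : Set (X × K)) := mem_ball.mp hv
    rw [dist_comm] at h3
    linarith
  have hGstarcpt : IsCompact Gstar := hGstarclosed.isCompact
  set D : Set X := Prod.fst '' Gstar with hDdef
  have hD : IsClosed D := (hGstarcpt.image continuous_fst).isClosed
  set φ : X → K := fun x =>
    if h : ∃ k : K, (x, k) ∈ Gstar then h.choose else Classical.arbitrary K with hφdef
  have hφ : ∀ (x : X) (k : K), (x, k) ∈ Gstar → φ x = k := by
    intro x k hk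
    have hex : ∃ k' : K, (x, k') ∈ Gstar := ⟨k, hk⟩
    have hspec : (x, hex.choose) ∈ Gstar := hex.choose_spec
    have hval : φ x = hex.choose := by rw [hφdef]; exact dif_pos hex
    obtain ⟨σ, hσ⟩ := (hGmem _).mp hspec
    obtain ⟨τ, hτ⟩ := (hGmem _).mp hk
    rw [hval]
    exact hcross σ τ x hex.choose k hσ hτ
  have hφmem : ∀ x ∈ D, (x, φ x) ∈ Gstar := by
    intro x hx
    obtain ⟨z, hz, hz1⟩ := hx
    have hzz : (x, z.2) ∈ Gstar := by
      rw [show ((x, z.2) : X × K) = z from Prod.ext hz1.symm rfl]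
      exact hz
    rw [hφ x z.2 hzz]
    exact hzz
  have hφcont : ContinuousOn φ D := by
    rw [continuousOn_iff_continuous_restrict]
    rw [continuous_iff_isClosed]
    intro Fc hFc
    have hkey : D.domRestrict φ ⁻¹' Fc =
        Subtype.val ⁻¹' (Prod.fst '' (Gstar ∩ (Set.univ ×ˢ Fc)) : Set X) := by
      ext x
      simp only [mem_preimage, domRestrict_apply]
      constructor
      · intro hφF
        exact ⟨(x.val, φ x.val), ⟨hφmem x.val x.2, ⟨trivial, hφF⟩⟩, rfl⟩
      · rintro ⟨z, ⟨hzG, -, hzF⟩, hzx⟩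
        have hzz : ((x : X), z.2) ∈ Gstar := by
          rw [show (((x : X), z.2) : X × K) = z from Prod.ext hzx.symm rfl]
          exact hzG
        rw [hφ _ _ hzz]
        exact hzF
    rw [hkey]
    exact (((hGstarcpt.inter_right (isClosed_univ.prod hFc)).image
      continuous_fst).isClosed).preimage continuous_subtype_val
  refine ⟨D, φ, hD, hφcont, Set.range ybr, not_scattered_range hycont hyinj, ?_⟩
  rintro y ⟨σ, rfl⟩
  apply Set.eq_univ_of_forall
  intro k
  obtain ⟨x, hx⟩ := hsurjbr σ k
  have hxG : (x, k) ∈ Gstar := (hGmem _).mpr ⟨σ, hx⟩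
  refine ⟨x, ⟨?_, ⟨(x, k), hxG, rfl⟩⟩, hφ x k hxG⟩
  have := hfib σ (x, k) hx
  simpa using this






end Main
end AuxSection



/-- If `X, Y, K` are compact metrizable, `f : X → Y` is continuous, and for uncountably
many `y ∈ Y` some closed subset of `f⁻¹{y}` maps continuously onto `K`, then there is a
`K`-loose function for `f`. -/
theorem stmt4 {X Y K : Type*}
    [TopologicalSpace X] [CompactSpace X] [TopologicalSpace.MetrizableSpace X]
    [TopologicalSpace Y] [CompactSpace Y] [TopologicalSpace.MetrizableSpace Y]
    [TopologicalSpace K] [CompactSpace K] [TopologicalSpace.MetrizableSpace K]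
    (f : X → Y) (hf : Continuous f)
    (h : ¬ {y : Y | ∃ C : Set X, IsClosed C ∧ C ⊆ f ⁻¹' {y} ∧
        ∃ ψ : X → K, ContinuousOn ψ C ∧ ψ '' C = Set.univ}.Countable) :
    ∃ (D : Set X) (φ : X → K), LooseFunction f D φ := by
  classical
  letI : MetricSpace X := TopologicalSpace.metrizableSpaceMetric X
  letI : MetricSpace Y := TopologicalSpace.metrizableSpaceMetric Y
  letI : MetricSpace K := TopologicalSpace.metrizableSpaceMetric K
  rcases isEmpty_or_nonempty K with hK | hK
  · have hSne : {y : Y | ∃ C : Set X, IsClosed C ∧ C ⊆ f ⁻¹' {y} ∧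
        ∃ ψ : X → K, ContinuousOn ψ C ∧ ψ '' C = Set.univ}.Nonempty := by
      rcases Set.eq_empty_or_nonempty {y : Y | ∃ C : Set X, IsClosed C ∧ C ⊆ f ⁻¹' {y} ∧
          ∃ ψ : X → K, ContinuousOn ψ C ∧ ψ '' C = Set.univ} with hEq | hne
      · rw [hEq] at h
        exact absurd Set.countable_empty h
      · exact hne
    obtain ⟨y₀, hy₀⟩ := hSne
    obtain ⟨C, -, -, ψ0, -, -⟩ := hy₀
    obtain ⟨Q, hQ⟩ := not_scattered_of_uncountable h
    refine ⟨∅, ψ0, isClosed_empty, continuousOn_empty _, Q, hQ, fun y _ => ?_⟩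
    rw [Set.inter_empty, Set.image_empty]
    exact (Set.univ_eq_empty_iff.mpr hK).symm
  · exact main_aux f hf _ h (fun y hy => hy)
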